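/- For all p₁, p₂, p₃ each equal to 0 or belonging to [1, ∞), and every h₀ with 0 < h₀ < 1/(s·c·c₃), there exists a constant c₇ > 0, depending only on p₁, p₂, p₃, s, c₃, c, m and h₀, such that: for every probability space, every drift function a, every matrix A⁽⁰⁾ and vector c⁽⁰⁾ with entries of absolute value at most c₃, every h ∈ (0, h₀), every t ∈ ℝ, every random data (G₁, …, G_m, Z) with E‖Z‖^{p₃} < ∞, every family of measurable random vectors H⁽⁰⁾₁, …, H⁽⁰⁾_s that almost surely form drift stage values with data (Z, t, h), and all indices j₁, j₂, j₃ ∈ {1, …, m}: E[ |G_{j₁}|^{p₁} · |ξ̂_{j₂,j₃}|^{p₂} · max_{1≤i≤s} ‖H⁽⁰⁾_i‖^{p₃} ] ≤ c₇ · (1 + E‖Z‖^{p₃}) · h^{p₁/2 + p₂} (a factor with exponent 0 is taken to be 1). (Lemma 6.7 in the commutative-noise form with ξ̂ = I^C or J^C, as asserted in Sections 6.5 and 6.6.) -/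

import Mathlib

open MeasureTheory ProbabilityTheory

section AuxForStmt12
open Real

-- pointwise bound |x|^r * pdf ≤ const * exp(-x²/4)
lemma aux_rpow_exp_bound {r : ℝ} (hr : 0 ≤ r) (x : ℝ) :
    |x| ^ r * Real.exp (-x^2 / 2) ≤ (Real.exp (r * r) + 1) * Real.exp (-(1/4) * x^2) := by
  have he4 : Real.exp (-x^2/2) ≤ Real.exp (-(1/4)*x^2) := by
    apply Real.exp_le_exp.mpr; nlinarith [sq_nonneg x]
  rcases le_total (|x|) 1 with h1 | h1
  · have h2 : |x| ^ r ≤ 1 := Real.rpow_le_one (abs_nonneg x) h1 hr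
    nlinarith [Real.exp_pos (-x^2/2), Real.exp_pos (-(1/4)*x^2), Real.exp_pos (r*r),
      Real.rpow_nonneg (abs_nonneg x) r]
  · have hx0 : 0 < |x| := lt_of_lt_of_le one_pos h1
    have h2 : |x| ^ r = Real.exp (Real.log |x| * r) := Real.rpow_def_of_pos hx0 r
    have hlog : Real.log |x| ≤ |x| := (Real.log_le_sub_one_of_pos hx0).trans (by linarith)
    have h3 : |x| ^ r ≤ Real.exp (|x| * r) := by
      rw [h2]; exact Real.exp_le_exp.mpr (by nlinarith)
    have h4 : |x| ^ r * Real.exp (-x^2/2) ≤ Real.exp (|x| * r + -x^2/2) := by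
      rw [Real.exp_add]; exact mul_le_mul_of_nonneg_right h3 (Real.exp_pos _).le
    have h5 : Real.exp (|x| * r + -x^2/2) ≤ Real.exp (r*r) * Real.exp (-(1/4)*x^2) := by
      rw [← Real.exp_add]; apply Real.exp_le_exp.mpr
      nlinarith [sq_nonneg (|x|/2 - r), sq_abs x]
    nlinarith [Real.exp_pos (-(1/4)*x^2)]

lemma aux_integrable_gauss1 {r : ℝ} (hr : 0 ≤ r) :
    Integrable (fun x : ℝ => |x| ^ r) (gaussianReal 0 1) := by
  rw [gaussianReal_of_var_ne_zero 0 one_ne_zero,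
    integrable_withDensity_iff (measurable_gaussianPDF 0 1)
      (Filter.Eventually.of_forall fun x => ENNReal.ofReal_lt_top)]
  have hmeas : Measurable fun x : ℝ => |x| ^ r * (gaussianPDF 0 1 x).toReal :=
    ((Real.continuous_rpow_const hr).measurable.comp measurable_abs).mul
      ((measurable_gaussianPDF 0 1).ennreal_toReal)
  apply Integrable.mono'
    (g := fun x => (Real.sqrt (2 * π))⁻¹ * ((Real.exp (r*r) + 1) * Real.exp (-(1/4) * x^2)))
    (((integrable_exp_neg_mul_sq (by norm_num : (0:ℝ) < 1/4)).const_mul _).const_mul _)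
    hmeas.aestronglyMeasurable
  refine Filter.Eventually.of_forall fun x => ?_
  have hpdf : (gaussianPDF 0 1 x).toReal = gaussianPDFReal 0 1 x :=
    ENNReal.toReal_ofReal (gaussianPDFReal_nonneg 0 1 x)
  have hnn : 0 ≤ |x| ^ r * (gaussianPDF 0 1 x).toReal := by
    rw [hpdf]; exact mul_nonneg (Real.rpow_nonneg (abs_nonneg x) r) (gaussianPDFReal_nonneg 0 1 x)
  rw [Real.norm_eq_abs, abs_of_nonneg hnn, hpdf]
  have : gaussianPDFReal 0 1 x = (Real.sqrt (2 * π))⁻¹ * Real.exp (-x^2/2) := by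
    simp [gaussianPDFReal]
  rw [this]
  have key := aux_rpow_exp_bound hr x
  have hs : 0 ≤ (Real.sqrt (2*π))⁻¹ := by positivity
  calc |x| ^ r * ((Real.sqrt (2*π))⁻¹ * Real.exp (-x^2/2))
      = (Real.sqrt (2*π))⁻¹ * (|x| ^ r * Real.exp (-x^2/2)) := by ring
    _ ≤ _ := mul_le_mul_of_nonneg_left key hs


lemma aux_gauss_scale {h : ℝ} (hh : 0 < h) :
    Measure.map (fun x => Real.sqrt h * x) (gaussianReal 0 1) = gaussianReal 0 h.toNNReal := by
  have := gaussianReal_map_const_mul (μ := 0) (v := 1) (Real.sqrt h)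
  rw [show ((Real.sqrt h * ·) : ℝ → ℝ) = fun x => Real.sqrt h * x from rfl] at this
  rw [this, mul_zero]
  congr 1
  ext1
  simp [Real.sq_sqrt hh.le, Real.coe_toNNReal _ hh.le]

lemma aux_gauss_moment {r : ℝ} (hr : 0 ≤ r) {h : ℝ} (hh : 0 < h)
    {Ω : Type} [MeasurableSpace Ω] {μ : Measure Ω} {G : Ω → ℝ}
    (hG : Measurable G) (hmap : Measure.map G μ = gaussianReal 0 h.toNNReal) :
    Integrable (fun ω => |G ω| ^ r) μ ∧
      ∫ ω, |G ω| ^ r ∂μ = h ^ (r / 2) * ∫ x, |x| ^ r ∂(gaussianReal 0 1) := by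
  have hmeasr : Measurable fun x : ℝ => |x| ^ r :=
    (Real.continuous_rpow_const hr).measurable.comp measurable_abs
  have hsq : ((fun x : ℝ => |x| ^ r) ∘ fun x => Real.sqrt h * x)
      = fun x => (Real.sqrt h) ^ r * |x| ^ r := by
    funext x
    simp only [Function.comp]
    rw [abs_mul, abs_of_nonneg (Real.sqrt_nonneg h),
      Real.mul_rpow (Real.sqrt_nonneg h) (abs_nonneg x)]
  have hsr : (Real.sqrt h) ^ r = h ^ (r / 2) := by
    rw [Real.sqrt_eq_rpow, ← Real.rpow_mul hh.le]
    congr 1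
    ring
  have hint1 : Integrable (fun x => |x| ^ r) (gaussianReal 0 h.toNNReal) := by
    rw [← aux_gauss_scale hh,
      integrable_map_measure hmeasr.aestronglyMeasurable
        (show Measurable fun x : ℝ => Real.sqrt h * x by fun_prop).aemeasurable, hsq]
    exact (aux_integrable_gauss1 hr).const_mul _
  constructor
  · have := (integrable_map_measure hmeasr.aestronglyMeasurable hG.aemeasurable).mp
      (by rw [hmap]; exact hint1)
    exact this
  · have h1 : ∫ ω, |G ω| ^ r ∂μ = ∫ x, |x| ^ r ∂(gaussianReal 0 h.toNNReal) := by
      rw [← hmap, integral_map hG.aemeasurable hmeasr.aestronglyMeasurable]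
    rw [h1, ← aux_gauss_scale hh,
      integral_map (show Measurable fun x : ℝ => Real.sqrt h * x by fun_prop).aemeasurable
        hmeasr.aestronglyMeasurable]
    simp_rw [abs_mul, abs_of_nonneg (Real.sqrt_nonneg h),
      Real.mul_rpow (Real.sqrt_nonneg h) (abs_nonneg _), integral_const_mul, hsr]

lemma aux_cube_amgm {x y z : ℝ} (hx : 0 ≤ x) (hy : 0 ≤ y) (hz : 0 ≤ z) :
    x * y * z ≤ (x^3 + y^3 + z^3)/3 := by
  nlinarith [sq_nonneg (x-y), sq_nonneg (y-z), sq_nonneg (x-z),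
    add_nonneg (add_nonneg hx hy) hz, mul_nonneg hx hy, mul_nonneg hy hz, mul_nonneg hx hz]

lemma aux_amgm_scaled {X Y Z α β : ℝ} (hX : 0 ≤ X) (hY : 0 ≤ Y) (hZ : 0 ≤ Z)
    (hα : 0 < α) (hβ : 0 < β) :
    X * (Y * Z) ≤ α * β^2 * ((X^3/α^3 + Y^3/β^3 + Z^3/β^3)/3) := by
  have h := aux_cube_amgm (div_nonneg hX hα.le) (div_nonneg hY hβ.le) (div_nonneg hZ hβ.le)
  rw [div_pow, div_pow, div_pow] at h
  have h2 := mul_le_mul_of_nonneg_left h (by positivity : (0:ℝ) ≤ α * β^2)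
  calc X * (Y * Z) = α * β^2 * (X/α * (Y/β) * (Z/β)) := by field_simp
    _ ≤ _ := h2

lemma aux_two_rpow {a b p : ℝ} (ha : 0 ≤ a) (hb : 0 ≤ b) (hp : 0 ≤ p) :
    (a + b) ^ p ≤ 2 ^ p * (a ^ p + b ^ p) := by
  have h1 : a + b ≤ 2 * max a b := by
    rcases le_total a b with h | h
    · rw [max_eq_right h]; linarith
    · rw [max_eq_left h]; linarith
  have h2 : (a + b) ^ p ≤ (2 * max a b) ^ p :=
    Real.rpow_le_rpow (by linarith) h1 hp
  rw [Real.mul_rpow (by norm_num) (le_max_iff.mpr (Or.inl ha))] at h2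
  refine h2.trans (mul_le_mul_of_nonneg_left ?_ (Real.rpow_nonneg (by norm_num) p))
  rcases le_total a b with h | h
  · rw [max_eq_right h]; nlinarith [Real.rpow_nonneg ha p]
  · rw [max_eq_left h]; nlinarith [Real.rpow_nonneg hb p]

lemma aux_rpow_mul_nat {x : ℝ} (hx : 0 ≤ x) (p : ℝ) (n : ℕ) :
    x ^ ((n : ℝ) * p) = (x ^ p) ^ n := by
  rw [mul_comm, Real.rpow_mul hx, Real.rpow_natCast]
end AuxForStmt12

set_option maxHeartbeats 1000000 in
/-- Lemma 6.7 (commutative-noise form with `ξ̂ = I^C` or `J^C`): mixed moment bound for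
a Gaussian increment, a commutative-noise multiplier and the drift stages of the SRK
method, with a constant depending only on `p₁, p₂, p₃, s, c₃, c, m, h₀`. -/
theorem stmt_12 (s m : ℕ) (hs : 0 < s) (hm : 0 < m)
    (c c₃ : ℝ) (hc : 0 < c) (hc₃ : 0 < c₃)
    (p₁ p₂ p₃ : ℝ) (hp₁ : p₁ = 0 ∨ 1 ≤ p₁) (hp₂ : p₂ = 0 ∨ 1 ≤ p₂) (hp₃ : p₃ = 0 ∨ 1 ≤ p₃)
    (h₀ : ℝ) (hh₀ : 0 < h₀) (hh₀' : h₀ < 1 / ((s : ℝ) * c * c₃)) :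
    ∃ c₇ > (0 : ℝ),
      ∀ (d : ℕ) (Ω : Type) [MeasurableSpace Ω] (μ : Measure Ω) [IsProbabilityMeasure μ]
        (a : ℝ → EuclideanSpace ℝ (Fin d) → EuclideanSpace ℝ (Fin d)),
        (∀ t x, ‖a t x‖ ≤ c * (1 + ‖x‖)) →
        ∀ (A0 : Fin s → Fin s → ℝ) (c0 : Fin s → ℝ),
          (∀ i j, |A0 i j| ≤ c₃) → (∀ j, |c0 j| ≤ c₃) →
        ∀ (h : ℝ), 0 < h → h < h₀ →
        ∀ (t : ℝ) (G : Fin m → Ω → ℝ) (Z : Ω → EuclideanSpace ℝ (Fin d)),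
          (∀ k, Measurable (G k)) → Measurable Z →
          iIndepFun G μ →
          (∀ k, Measure.map (G k) μ = gaussianReal 0 h.toNNReal) →
          IndepFun Z (fun ω (k : Fin m) => G k ω) μ →
          Integrable (fun ω => ‖Z ω‖ ^ p₃) μ →
        ∀ (ξ : Fin m → Fin m → Ω → ℝ),
          ((∀ r k ω, ξ r k ω = G r ω * G k ω / 2) ∨
            (∀ r k ω, ξ r k ω = G r ω * G k ω / 2 - if r = k then h / 2 else 0)) →
        ∀ (H0 : Fin s → Ω → EuclideanSpace ℝ (Fin d)),
          (∀ i, Measurable (H0 i)) →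
          (∀ᵐ ω ∂μ, ∀ i, H0 i ω = Z ω + h • ∑ j, A0 i j • a (t + c0 j * h) (H0 j ω)) →
        ∀ (j₁ j₂ j₃ : Fin m),
          ∫ ω, |G j₁ ω| ^ p₁ * |ξ j₂ j₃ ω| ^ p₂ * (⨆ i : Fin s, ‖H0 i ω‖ ^ p₃) ∂μ
            ≤ c₇ * (1 + ∫ ω, ‖Z ω‖ ^ p₃ ∂μ) * h ^ (p₁ / 2 + p₂) := by
  have hp₁' : 0 ≤ p₁ := by rcases hp₁ with h | h <;> linarith
  have hp₂' : 0 ≤ p₂ := by rcases hp₂ with h | h <;> linarith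
  have hp₃' : 0 ≤ p₃ := by rcases hp₃ with h | h <;> linarith
  clear hp₁ hp₂ hp₃
  set κ : ℝ → ℝ := fun r => ∫ x, |x| ^ r ∂(gaussianReal 0 1) with hκdef
  have hκnn : ∀ r, 0 ≤ κ r := fun r => integral_nonneg fun x => Real.rpow_nonneg (abs_nonneg x) r
  have hscc : 0 < (s : ℝ) * c * c₃ := by
    have hs0 : (0:ℝ) < (s : ℝ) := by exact_mod_cast hs
    positivity
  set q : ℝ := (s : ℝ) * c * c₃ * h₀ with hqdef
  have hq0 : 0 < q := mul_pos hscc hh₀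
  have hq1 : q < 1 := by
    have h1 : h₀ * ((s : ℝ) * c * c₃) < 1 := (lt_div_iff₀ hscc).mp hh₀'
    rw [hqdef]; nlinarith
  set K₃ : ℝ := (2 * (1 + q) / (1 - q)) ^ p₃ with hK₃def
  have hKb : 0 < 2 * (1 + q) / (1 - q) := by
    apply div_pos <;> nlinarith
  have hK₃0 : 0 ≤ K₃ := Real.rpow_nonneg hKb.le p₃
  set C₂ : ℝ := 2 ^ p₂ * ((κ (3 * p₁) + 2 * κ (3 * p₂)) / 3 + κ p₁) with hC₂def
  have h2p : (1:ℝ) ≤ 2 ^ p₂ := by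
    rw [show (1:ℝ) = 1 ^ p₂ by rw [Real.one_rpow]]
    exact Real.rpow_le_rpow (by norm_num) (by norm_num) hp₂'
  have hC₂0 : 0 ≤ C₂ := by
    have k1 := hκnn (3 * p₁); have k2 := hκnn (3 * p₂); have k3 := hκnn p₁
    rw [hC₂def]; nlinarith
  set e : ℝ := p₁ / 2 + p₂ with hedef
  refine ⟨K₃ * C₂ + 1, by nlinarith [mul_nonneg hK₃0 hC₂0], ?_⟩
  intro d Ω _ μ _ a ha A0 c0 hA0 hc0 h hh hhh₀ t G Z hGmeas hZmeas hiIndep hGmap hIndep hZint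
    ξ hξ H0 hH0meas hH0ae j₁ j₂ j₃
  obtain ⟨δ, hδ0, hδh, hξ'⟩ : ∃ δ : ℝ, 0 ≤ δ ∧ δ ≤ h / 2 ∧
      ∀ ω, ξ j₂ j₃ ω = G j₂ ω * G j₃ ω / 2 - (if j₂ = j₃ then δ else 0) := by
    rcases hξ with hξ | hξ
    · exact ⟨0, le_refl _, by linarith, fun ω => by simp [hξ j₂ j₃ ω]⟩
    · exact ⟨h / 2, by linarith, le_refl _, fun ω => hξ j₂ j₃ ω⟩
  have hmom : ∀ (r : ℝ), 0 ≤ r → ∀ k : Fin m, Integrable (fun ω => |G k ω| ^ r) μ ∧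
      ∫ ω, |G k ω| ^ r ∂μ = h ^ (r / 2) * κ r :=
    fun r hr k => aux_gauss_moment hr hh (hGmeas k) (hGmap k)
  have hhe : 0 < h ^ e := Real.rpow_pos_of_pos hh e
  set T₁ : Ω → ℝ := fun ω => |G j₁ ω| ^ (3 * p₁) / h ^ ((3 * p₁) / 2) with hT₁
  set T₂ : Ω → ℝ := fun ω => |G j₂ ω| ^ (3 * p₂) / h ^ ((3 * p₂) / 2) with hT₂
  set T₃ : Ω → ℝ := fun ω => |G j₃ ω| ^ (3 * p₂) / h ^ ((3 * p₂) / 2) with hT₃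
  set D : Ω → ℝ := fun ω =>
    2 ^ p₂ * (h ^ e * ((T₁ ω + T₂ ω + T₃ ω) / 3) + |G j₁ ω| ^ p₁ * (h / 2) ^ p₂) with hD
  have hptF : ∀ ω, |G j₁ ω| ^ p₁ * |ξ j₂ j₃ ω| ^ p₂ ≤ D ω := by
    intro ω
    have hξb : |ξ j₂ j₃ ω| ≤ |G j₂ ω| * |G j₃ ω| / 2 + h / 2 := by
      rw [hξ' ω]
      have h1 : |G j₂ ω * G j₃ ω / 2 - (if j₂ = j₃ then δ else 0)|
          ≤ |G j₂ ω * G j₃ ω / 2| + |if j₂ = j₃ then δ else 0| := by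
        rw [sub_eq_add_neg]
        exact (abs_add_le _ _).trans_eq (by rw [abs_neg])
      have h2 : |G j₂ ω * G j₃ ω / 2| = |G j₂ ω| * |G j₃ ω| / 2 := by
        rw [abs_div, abs_mul]; norm_num
      have h3 : |if j₂ = j₃ then δ else 0| ≤ h / 2 := by
        split_ifs
        · rwa [abs_of_nonneg hδ0]
        · simp; linarith
      rw [h2] at h1; linarith
    have hAnn : (0:ℝ) ≤ |G j₁ ω| ^ p₁ := Real.rpow_nonneg (abs_nonneg _) _
    have step1 : |ξ j₂ j₃ ω| ^ p₂ ≤ 2 ^ p₂ * (|G j₂ ω| ^ p₂ * |G j₃ ω| ^ p₂ + (h / 2) ^ p₂) := by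
      calc |ξ j₂ j₃ ω| ^ p₂ ≤ (|G j₂ ω| * |G j₃ ω| / 2 + h / 2) ^ p₂ :=
            Real.rpow_le_rpow (abs_nonneg _) hξb hp₂'
        _ ≤ 2 ^ p₂ * ((|G j₂ ω| * |G j₃ ω| / 2) ^ p₂ + (h / 2) ^ p₂) :=
            aux_two_rpow (by positivity) (by positivity) hp₂'
        _ ≤ _ := by
            have hmm : (0:ℝ) ≤ |G j₂ ω| * |G j₃ ω| :=
              mul_nonneg (abs_nonneg _) (abs_nonneg _)
            have hle : (|G j₂ ω| * |G j₃ ω| / 2) ^ p₂ ≤ |G j₂ ω| ^ p₂ * |G j₃ ω| ^ p₂ := by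
              rw [← Real.mul_rpow (abs_nonneg _) (abs_nonneg _)]
              exact Real.rpow_le_rpow (by positivity) (by linarith) hp₂'
            nlinarith [Real.rpow_nonneg (show (0:ℝ) ≤ 2 by norm_num) p₂]
    have hAM : |G j₁ ω| ^ p₁ * (|G j₂ ω| ^ p₂ * |G j₃ ω| ^ p₂)
        ≤ h ^ e * ((T₁ ω + T₂ ω + T₃ ω) / 3) := by
      have hα : (0:ℝ) < h ^ (p₁ / 2) := Real.rpow_pos_of_pos hh _
      have hβ : (0:ℝ) < h ^ (p₂ / 2) := Real.rpow_pos_of_pos hh _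
      have key := aux_amgm_scaled (Real.rpow_nonneg (abs_nonneg (G j₁ ω)) p₁)
        (Real.rpow_nonneg (abs_nonneg (G j₂ ω)) p₂)
        (Real.rpow_nonneg (abs_nonneg (G j₃ ω)) p₂) hα hβ
      have e1 : (|G j₁ ω| ^ p₁) ^ (3:ℕ) = |G j₁ ω| ^ (3 * p₁) := by
        rw [show (3:ℝ) * p₁ = ((3:ℕ):ℝ) * p₁ by norm_num, aux_rpow_mul_nat (abs_nonneg _)]
      have e2 : (|G j₂ ω| ^ p₂) ^ (3:ℕ) = |G j₂ ω| ^ (3 * p₂) := by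
        rw [show (3:ℝ) * p₂ = ((3:ℕ):ℝ) * p₂ by norm_num, aux_rpow_mul_nat (abs_nonneg _)]
      have e3 : (|G j₃ ω| ^ p₂) ^ (3:ℕ) = |G j₃ ω| ^ (3 * p₂) := by
        rw [show (3:ℝ) * p₂ = ((3:ℕ):ℝ) * p₂ by norm_num, aux_rpow_mul_nat (abs_nonneg _)]
      have e4 : (h ^ (p₁ / 2)) ^ (3:ℕ) = h ^ ((3 * p₁) / 2) := by
        rw [← aux_rpow_mul_nat hh.le (p₁ / 2) 3]; congr 1; push_cast; ring
      have e5 : (h ^ (p₂ / 2)) ^ (3:ℕ) = h ^ ((3 * p₂) / 2) := by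
        rw [← aux_rpow_mul_nat hh.le (p₂ / 2) 3]; congr 1; push_cast; ring
      have e7 : h ^ (p₁ / 2) * (h ^ (p₂ / 2)) ^ (2:ℕ) = h ^ e := by
        rw [← aux_rpow_mul_nat hh.le (p₂ / 2) 2, ← Real.rpow_add hh]
        congr 1; rw [hedef]; push_cast; ring
      rw [e1, e2, e3, e4, e5, e7] at key
      simp only [hT₁, hT₂, hT₃]
      exact key
    calc |G j₁ ω| ^ p₁ * |ξ j₂ j₃ ω| ^ p₂
        ≤ |G j₁ ω| ^ p₁ * (2 ^ p₂ * (|G j₂ ω| ^ p₂ * |G j₃ ω| ^ p₂ + (h / 2) ^ p₂)) :=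
          mul_le_mul_of_nonneg_left step1 hAnn
      _ = 2 ^ p₂ * (|G j₁ ω| ^ p₁ * (|G j₂ ω| ^ p₂ * |G j₃ ω| ^ p₂)
            + |G j₁ ω| ^ p₁ * (h / 2) ^ p₂) := by ring
      _ ≤ D ω := by
          simp only [hD]
          exact mul_le_mul_of_nonneg_left (by linarith [hAM])
            (Real.rpow_nonneg (by norm_num) p₂)
  have hintT₁ : Integrable T₁ μ := by
    rw [hT₁]; exact ((hmom (3 * p₁) (by positivity) j₁).1).div_const _
  have hintT₂ : Integrable T₂ μ := by
    rw [hT₂]; exact ((hmom (3 * p₂) (by positivity) j₂).1).div_const _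
  have hintT₃ : Integrable T₃ μ := by
    rw [hT₃]; exact ((hmom (3 * p₂) (by positivity) j₃).1).div_const _
  have hintA : Integrable (fun ω => |G j₁ ω| ^ p₁) μ := (hmom p₁ hp₁' j₁).1
  have hintD : Integrable D μ := by
    rw [hD]
    exact (((((hintT₁.add hintT₂).add hintT₃).div_const 3).const_mul (h ^ e)).add
      (hintA.mul_const ((h / 2) ^ p₂))).const_mul _
  have hImain : ∫ ω, D ω ∂μ ≤ C₂ * h ^ e := by
    have hIT₁ : ∫ ω, T₁ ω ∂μ = κ (3 * p₁) := by
      simp only [hT₁]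
      rw [integral_div, (hmom (3 * p₁) (by positivity) j₁).2, mul_comm,
        mul_div_assoc, div_self (ne_of_gt (Real.rpow_pos_of_pos hh _)), mul_one]
    have hIT₂ : ∫ ω, T₂ ω ∂μ = κ (3 * p₂) := by
      simp only [hT₂]
      rw [integral_div, (hmom (3 * p₂) (by positivity) j₂).2, mul_comm,
        mul_div_assoc, div_self (ne_of_gt (Real.rpow_pos_of_pos hh _)), mul_one]
    have hIT₃ : ∫ ω, T₃ ω ∂μ = κ (3 * p₂) := by
      simp only [hT₃]
      rw [integral_div, (hmom (3 * p₂) (by positivity) j₃).2, mul_comm,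
        mul_div_assoc, div_self (ne_of_gt (Real.rpow_pos_of_pos hh _)), mul_one]
    have hcalc : ∫ ω, D ω ∂μ = 2 ^ p₂ * (h ^ e * ((κ (3 * p₁) + κ (3 * p₂) + κ (3 * p₂)) / 3)
        + (h ^ (p₁ / 2) * κ p₁) * (h / 2) ^ p₂) := by
      simp only [hD]
      rw [integral_const_mul]
      congr 1
      have hf1 : Integrable (fun ω => h ^ e * ((T₁ ω + T₂ ω + T₃ ω) / 3)) μ :=
        (((hintT₁.add hintT₂).add hintT₃).div_const 3).const_mul (h ^ e)
      have hg1 : Integrable (fun ω => |G j₁ ω| ^ p₁ * (h / 2) ^ p₂) μ :=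
        hintA.mul_const _
      have hadd12 : Integrable (fun ω => T₁ ω + T₂ ω) μ := hintT₁.add hintT₂
      have hadd123 : Integrable (fun ω => T₁ ω + T₂ ω + T₃ ω) μ := hadd12.add hintT₃
      have hdiv3 : Integrable (fun ω => (T₁ ω + T₂ ω + T₃ ω) / 3) μ := hadd123.div_const 3
      rw [integral_add hf1 hg1, integral_const_mul, integral_mul_const, integral_div,
        integral_add hadd12 hintT₃, integral_add hintT₁ hintT₂,
        hIT₁, hIT₂, hIT₃, (hmom p₁ hp₁' j₁).2]
    rw [hcalc, hC₂def]
    have hsplit : (h / 2) ^ p₂ ≤ h ^ p₂ := Real.rpow_le_rpow (by positivity) (by linarith) hp₂'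
    have hhp : h ^ (p₁ / 2) * h ^ p₂ = h ^ e := by
      rw [← Real.rpow_add hh]
    have h1 : (h ^ (p₁ / 2) * κ p₁) * (h / 2) ^ p₂ ≤ κ p₁ * h ^ e := by
      calc (h ^ (p₁ / 2) * κ p₁) * (h / 2) ^ p₂ ≤ (h ^ (p₁ / 2) * κ p₁) * h ^ p₂ :=
            mul_le_mul_of_nonneg_left hsplit
              (mul_nonneg (Real.rpow_nonneg hh.le _) (hκnn p₁))
        _ = κ p₁ * h ^ e := by rw [← hhp]; ring
    nlinarith [mul_le_mul_of_nonneg_left h1 (by positivity : (0:ℝ) ≤ (2:ℝ) ^ p₂)]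
  have hFmeas : Measurable (fun ω => |G j₁ ω| ^ p₁ * |ξ j₂ j₃ ω| ^ p₂) := by
    have mξ : Measurable (ξ j₂ j₃) := by
      rw [show ξ j₂ j₃ = fun ω => G j₂ ω * G j₃ ω / 2 - (if j₂ = j₃ then δ else 0) from
        funext hξ']
      exact (((hGmeas j₂).mul (hGmeas j₃)).div_const 2).sub measurable_const
    exact ((Real.continuous_rpow_const hp₁').measurable.comp (hGmeas j₁).abs).mul
      ((Real.continuous_rpow_const hp₂').measurable.comp mξ.abs)
  have hFnn : ∀ ω, 0 ≤ |G j₁ ω| ^ p₁ * |ξ j₂ j₃ ω| ^ p₂ := fun ω =>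
    mul_nonneg (Real.rpow_nonneg (abs_nonneg _) _) (Real.rpow_nonneg (abs_nonneg _) _)
  have hFint : Integrable (fun ω => |G j₁ ω| ^ p₁ * |ξ j₂ j₃ ω| ^ p₂) μ := by
    refine hintD.mono' hFmeas.aestronglyMeasurable (Filter.Eventually.of_forall fun ω => ?_)
    rw [Real.norm_eq_abs, abs_of_nonneg (hFnn ω)]
    exact hptF ω
  have hIF : ∫ ω, |G j₁ ω| ^ p₁ * |ξ j₂ j₃ ω| ^ p₂ ∂μ ≤ C₂ * h ^ e :=
    (integral_mono_of_nonneg (Filter.Eventually.of_forall hFnn) hintD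
      (Filter.Eventually.of_forall hptF)).trans hImain
  have hψmeas : Measurable (fun z : EuclideanSpace ℝ (Fin d) => K₃ * (1 + ‖z‖ ^ p₃)) :=
    (measurable_const.add ((Real.continuous_rpow_const hp₃').measurable.comp
      measurable_norm)).const_mul K₃
  have hφmeas : Measurable (fun v : Fin m → ℝ =>
      |v j₁| ^ p₁ * |v j₂ * v j₃ / 2 - (if j₂ = j₃ then δ else 0)| ^ p₂) :=
    ((Real.continuous_rpow_const hp₁').measurable.comp (measurable_pi_apply j₁).abs).mul
      ((Real.continuous_rpow_const hp₂').measurable.comp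
        ((((measurable_pi_apply j₂).mul (measurable_pi_apply j₃)).div_const 2).sub
          measurable_const).abs)
  have hIndep2 : IndepFun (fun ω => |G j₁ ω| ^ p₁ * |ξ j₂ j₃ ω| ^ p₂)
      (fun ω => K₃ * (1 + ‖Z ω‖ ^ p₃)) μ := by
    have h1 : (fun ω => |G j₁ ω| ^ p₁ * |ξ j₂ j₃ ω| ^ p₂)
        = (fun v : Fin m → ℝ =>
            |v j₁| ^ p₁ * |v j₂ * v j₃ / 2 - (if j₂ = j₃ then δ else 0)| ^ p₂)
          ∘ (fun ω (k : Fin m) => G k ω) := by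
      funext ω; simp only [Function.comp]; rw [hξ' ω]
    rw [h1]
    exact (hIndep.comp hψmeas hφmeas).symm
  have hψint : Integrable (fun ω => K₃ * (1 + ‖Z ω‖ ^ p₃)) μ :=
    ((integrable_const 1).add hZint).const_mul K₃
  have hprodint : Integrable
      (fun ω => (|G j₁ ω| ^ p₁ * |ξ j₂ j₃ ω| ^ p₂) * (K₃ * (1 + ‖Z ω‖ ^ p₃))) μ :=
    hIndep2.integrable_mul hFint hψint
  have hIZ0 : 0 ≤ ∫ ω, ‖Z ω‖ ^ p₃ ∂μ :=
    integral_nonneg fun ω => Real.rpow_nonneg (norm_nonneg _) _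
  have hprodeq : ∫ ω, (|G j₁ ω| ^ p₁ * |ξ j₂ j₃ ω| ^ p₂) * (K₃ * (1 + ‖Z ω‖ ^ p₃)) ∂μ
      = (∫ ω, |G j₁ ω| ^ p₁ * |ξ j₂ j₃ ω| ^ p₂ ∂μ)
        * (K₃ * (1 + ∫ ω, ‖Z ω‖ ^ p₃ ∂μ)) := by
    have hmul := hIndep2.integral_mul_eq_mul_integral hFint.aestronglyMeasurable hψint.aestronglyMeasurable
    have hid : integral μ ((fun ω => |G j₁ ω| ^ p₁ * |ξ j₂ j₃ ω| ^ p₂)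
          * fun ω => K₃ * (1 + ‖Z ω‖ ^ p₃))
        = ∫ ω, (|G j₁ ω| ^ p₁ * |ξ j₂ j₃ ω| ^ p₂) * (K₃ * (1 + ‖Z ω‖ ^ p₃)) ∂μ := rfl
    rw [← hid, hmul]
    congr 1
    rw [integral_const_mul, integral_add (integrable_const 1) hZint, integral_const]
    simp [measure_univ]
  have hae : ∀ᵐ ω ∂μ, |G j₁ ω| ^ p₁ * |ξ j₂ j₃ ω| ^ p₂ * (⨆ i : Fin s, ‖H0 i ω‖ ^ p₃)
      ≤ (|G j₁ ω| ^ p₁ * |ξ j₂ j₃ ω| ^ p₂) * (K₃ * (1 + ‖Z ω‖ ^ p₃)) := by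
    filter_upwards [hH0ae] with ω hω
    refine mul_le_mul_of_nonneg_left ?_ (hFnn ω)
    haveI : Nonempty (Fin s) := ⟨⟨0, hs⟩⟩
    have hbdd : BddAbove (Set.range fun i : Fin s => ‖H0 i ω‖) :=
      (Set.finite_range _).bddAbove
    set M : ℝ := ⨆ i : Fin s, ‖H0 i ω‖ with hMdef
    have hMub : ∀ i, ‖H0 i ω‖ ≤ M := fun i => le_ciSup hbdd i
    have hM0 : 0 ≤ M := le_trans (norm_nonneg _) (hMub ⟨0, hs⟩)
    have hstep : ∀ i, ‖H0 i ω‖ ≤ ‖Z ω‖ + q * (1 + M) := by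
      intro i
      have hb : ‖∑ j : Fin s, A0 i j • a (t + c0 j * h) (H0 j ω)‖
          ≤ (s : ℝ) * (c₃ * (c * (1 + M))) := by
        refine (norm_sum_le _ _).trans ?_
        have hterm : ∀ j : Fin s, ‖A0 i j • a (t + c0 j * h) (H0 j ω)‖
            ≤ c₃ * (c * (1 + M)) := by
          intro j
          rw [norm_smul, Real.norm_eq_abs]
          have h1 : ‖a (t + c0 j * h) (H0 j ω)‖ ≤ c * (1 + M) :=
            (ha _ _).trans (by nlinarith [hMub j, hc.le])
          exact mul_le_mul (hA0 i j) h1 (norm_nonneg _) hc₃.le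
        calc ∑ j : Fin s, ‖A0 i j • a (t + c0 j * h) (H0 j ω)‖
            ≤ ∑ _j : Fin s, c₃ * (c * (1 + M)) :=
              Finset.sum_le_sum fun j _ => hterm j
          _ = (s : ℝ) * (c₃ * (c * (1 + M))) := by
              rw [Finset.sum_const, Finset.card_univ, Fintype.card_fin, nsmul_eq_mul]
      rw [hω i]
      have h2 : |h| * ‖∑ j : Fin s, A0 i j • a (t + c0 j * h) (H0 j ω)‖
          ≤ h * ((s : ℝ) * (c₃ * (c * (1 + M)))) := by
        rw [abs_of_pos hh]
        exact mul_le_mul_of_nonneg_left hb hh.le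
      have h3 : h * ((s : ℝ) * (c₃ * (c * (1 + M)))) ≤ q * (1 + M) := by
        have hbase : (0:ℝ) ≤ (s : ℝ) * (c₃ * (c * (1 + M))) := by
          have hs0 : (0:ℝ) ≤ (s : ℝ) := Nat.cast_nonneg s
          nlinarith
        calc h * ((s : ℝ) * (c₃ * (c * (1 + M))))
            ≤ h₀ * ((s : ℝ) * (c₃ * (c * (1 + M)))) :=
              mul_le_mul_of_nonneg_right hhh₀.le hbase
          _ = q * (1 + M) := by rw [hqdef]; ring
      calc ‖Z ω + h • ∑ j : Fin s, A0 i j • a (t + c0 j * h) (H0 j ω)‖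
          ≤ ‖Z ω‖ + ‖h • ∑ j : Fin s, A0 i j • a (t + c0 j * h) (H0 j ω)‖ := norm_add_le _ _
        _ = ‖Z ω‖ + |h| * ‖∑ j : Fin s, A0 i j • a (t + c0 j * h) (H0 j ω)‖ := by
            rw [norm_smul, Real.norm_eq_abs]
        _ ≤ ‖Z ω‖ + q * (1 + M) := by linarith
    have hM2 : M ≤ (2 * (1 + q) / (1 - q)) * max 1 ‖Z ω‖ := by
      have hM1 : M ≤ ‖Z ω‖ + q * (1 + M) := ciSup_le hstep
      rw [div_mul_eq_mul_div, le_div_iff₀ (by linarith : (0:ℝ) < 1 - q)]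
      have hR1 : (1:ℝ) ≤ max 1 ‖Z ω‖ := le_max_left _ _
      have hZR : ‖Z ω‖ ≤ max 1 ‖Z ω‖ := le_max_right _ _
      nlinarith [mul_le_mul_of_nonneg_left hR1 hq0.le]
    have hRp : (max 1 ‖Z ω‖) ^ p₃ ≤ 1 + ‖Z ω‖ ^ p₃ := by
      rcases le_total ‖Z ω‖ 1 with h1 | h1
      · rw [max_eq_left h1, Real.one_rpow]
        linarith [Real.rpow_nonneg (norm_nonneg (Z ω)) p₃]
      · rw [max_eq_right h1]
        linarith
    refine ciSup_le fun i => ?_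
    calc ‖H0 i ω‖ ^ p₃ ≤ ((2 * (1 + q) / (1 - q)) * max 1 ‖Z ω‖) ^ p₃ :=
          Real.rpow_le_rpow (norm_nonneg _) ((hMub i).trans hM2) hp₃'
      _ = K₃ * (max 1 ‖Z ω‖) ^ p₃ := by
          rw [Real.mul_rpow hKb.le (by positivity), hK₃def]
      _ ≤ K₃ * (1 + ‖Z ω‖ ^ p₃) := mul_le_mul_of_nonneg_left hRp hK₃0
  have hsupnn : ∀ ω, 0 ≤ ⨆ i : Fin s, ‖H0 i ω‖ ^ p₃ := fun ω =>
    Real.iSup_nonneg fun i => Real.rpow_nonneg (norm_nonneg _) _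
  calc ∫ ω, |G j₁ ω| ^ p₁ * |ξ j₂ j₃ ω| ^ p₂ * (⨆ i : Fin s, ‖H0 i ω‖ ^ p₃) ∂μ
      ≤ ∫ ω, (|G j₁ ω| ^ p₁ * |ξ j₂ j₃ ω| ^ p₂) * (K₃ * (1 + ‖Z ω‖ ^ p₃)) ∂μ :=
        integral_mono_of_nonneg (Filter.Eventually.of_forall fun ω =>
          mul_nonneg (hFnn ω) (hsupnn ω)) hprodint hae
    _ = (∫ ω, |G j₁ ω| ^ p₁ * |ξ j₂ j₃ ω| ^ p₂ ∂μ)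
        * (K₃ * (1 + ∫ ω, ‖Z ω‖ ^ p₃ ∂μ)) := hprodeq
    _ ≤ (K₃ * C₂ + 1) * (1 + ∫ ω, ‖Z ω‖ ^ p₃ ∂μ) * h ^ e := by
        have hFI0 : 0 ≤ ∫ ω, |G j₁ ω| ^ p₁ * |ξ j₂ j₃ ω| ^ p₂ ∂μ := integral_nonneg hFnn
        nlinarith [mul_le_mul_of_nonneg_right hIF
            (mul_nonneg hK₃0 (by linarith : (0:ℝ) ≤ 1 + ∫ ω, ‖Z ω‖ ^ p₃ ∂μ)),
          mul_pos hhe (show (0:ℝ) < 1 + ∫ ω, ‖Z ω‖ ^ p₃ ∂μ by linarith),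
          mul_nonneg (mul_nonneg hK₃0 hC₂0)
            (mul_nonneg (by linarith : (0:ℝ) ≤ 1 + ∫ ω, ‖Z ω‖ ^ p₃ ∂μ) hhe.le)]
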